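/- For every prime p > 3, the binomial coefficient C(2p−1, p−1) is congruent to 1 modulo p³ (a form of Wolstenholme's theorem); in particular C(2p, p) ≡ 2 (mod p³). -/

import Mathlib

open Polynomial Finset

private lemma reflect_Ico {M : Type*} [CommMonoid M] (p : ℕ) (g : ℕ → M) :
    ∏ k ∈ Finset.Ico 1 p, g (p - k) = ∏ k ∈ Finset.Ico 1 p, g k :=
 by
  refine Finset.prod_nbij' (fun k => p - k) (fun k => p - k) ?_ ?_ ?_ ?_ ?_ <;>
    intro a ha <;>
    first
      | rfl
      | (simp only [Finset.mem_Ico] at ha ⊢; omega)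

private lemma zmod_prod (p : ℕ) (hp : p.Prime) :
    ∏ k ∈ Finset.Ico 1 p, (X - C (k : ZMod p)) = X ^ (p - 1) - 1 := by
  haveI : Fact p.Prime := ⟨hp⟩
  haveI : NeZero p := ⟨hp.pos.ne'⟩
  have hcard : Fintype.card (ZMod p) = p := ZMod.card p
  have h1 : ∏ a : ZMod p, (X - C a) = X ^ p - X := by
    have hroots : (X ^ p - X : (ZMod p)[X]).roots = Finset.univ.val := by
      have := FiniteField.roots_X_pow_card_sub_X (ZMod p)
      rwa [hcard] at this
    have hdeg : (X ^ p - X : (ZMod p)[X]).natDegree = p :=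
      FiniteField.X_pow_card_sub_X_natDegree_eq (ZMod p) hp.one_lt
    have hmonic : (X ^ p - X : (ZMod p)[X]).Monic := by
      apply monic_X_pow_sub
      rw [degree_X]
      exact_mod_cast hp.one_lt
    have hc : Multiset.card (X ^ p - X : (ZMod p)[X]).roots
        = (X ^ p - X : (ZMod p)[X]).natDegree := by
      rw [hroots, hdeg]
      simp [hcard]
    have := prod_multiset_X_sub_C_of_monic_of_roots_card_eq hmonic hc
    rw [hroots] at this
    rw [← this]
    rfl
  have h2 : ∏ a : ZMod p, (X - C a) = ∏ k ∈ Finset.range p, (X - C (k : ZMod p)) := by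
    apply Finset.prod_nbij' (fun a => ZMod.val a) (fun k => (k : ZMod p))
    · intro a _; simpa using ZMod.val_lt a
    · intro k _; exact Finset.mem_univ _
    · intro a _; exact ZMod.natCast_rightInverse a
    · intro k hk; exact ZMod.val_cast_of_lt (Finset.mem_range.mp hk)
    · intro a _; rw [ZMod.natCast_rightInverse a]
  have h3 : ∏ k ∈ Finset.range p, (X - C (k : ZMod p))
      = X * ∏ k ∈ Finset.Ico 1 p, (X - C (k : ZMod p)) := by
    rw [Finset.range_eq_Ico, Finset.prod_eq_prod_Ico_succ_bot hp.pos]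
    simp
  have h4 : (X : (ZMod p)[X]) ^ p - X = X * (X ^ (p - 1) - 1) := by
    have hpp : p - 1 + 1 = p := Nat.succ_pred_eq_of_pos hp.pos
    rw [mul_sub, mul_one, ← pow_succ', hpp]
  have hX : (X : (ZMod p)[X]) ≠ 0 := X_ne_zero
  apply mul_left_cancel₀ hX
  rw [← h3, ← h2, h1, h4]

theorem stmt_15 (p : ℕ) (hp : p.Prime) (hp3 : 3 < p) :
    (((2 * p - 1).choose (p - 1) : ZMod (p ^ 3)) = 1) ∧
      (((2 * p).choose p : ZMod (p ^ 3)) = 2) := by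
  have hp0 : 0 < p := hp.pos
  set f : ℤ[X] := ∏ k ∈ Finset.Ico 1 p, (X + C (k : ℤ)) with hf
  have hfact : ∏ k ∈ Finset.Ico 1 p, (k : ℤ) = ((p - 1).factorial : ℤ) := by
    rw [← Nat.cast_prod]
    congr 1
    have h := Finset.prod_Ico_id_eq_factorial (p - 1)
    rwa [Nat.sub_add_cancel hp0] at h
  -- coeff 0
  have ha0 : f.coeff 0 = ((p - 1).factorial : ℤ) := by
    rw [coeff_zero_eq_eval_zero, hf, eval_prod]
    simpa using hfact
  -- eval (-p)
  have hevalneg : f.eval (-(p : ℤ)) = ((p - 1).factorial : ℤ) := by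
    rw [hf, eval_prod]
    simp only [eval_add, eval_X, eval_C]
    have := reflect_Ico p (fun k => (-(p : ℤ) + (k : ℤ)))
    rw [← this]
    have : ∏ k ∈ Finset.Ico 1 p, (-(p : ℤ) + ((p - k : ℕ) : ℤ))
        = ∏ k ∈ Finset.Ico 1 p, (-(k : ℤ)) := by
      apply Finset.prod_congr rfl
      intro k hk
      have hk' := Finset.mem_Ico.mp hk
      have : ((p - k : ℕ) : ℤ) = (p : ℤ) - (k : ℤ) := by
        push_cast [Nat.cast_sub hk'.2.le]; ring
      rw [this]; ring
    rw [this]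
    have : ∏ k ∈ Finset.Ico 1 p, (-(k : ℤ))
        = (-1) ^ (Finset.Ico 1 p).card * ∏ k ∈ Finset.Ico 1 p, (k : ℤ) := by
      rw [← Finset.prod_const, ← Finset.prod_mul_distrib]
      apply Finset.prod_congr rfl; intros; ring
    rw [this, Nat.card_Ico, hfact]
    have heven : Even (p - 1) := by
      have := hp.odd_of_ne_two (by omega)
      rcases this with ⟨m, hm⟩
      exact ⟨m, by omega⟩
    rw [heven.neg_one_pow, one_mul]
  -- eval p
  have hnat : (2 * p - 1).choose (p - 1) * (p - 1).factorial
      = ∏ k ∈ Finset.Ico 1 p, (p + k) := by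
    apply Nat.eq_of_mul_eq_mul_right (Nat.factorial_pos p)
    have h1 : (2 * p - 1).choose (p - 1) * (p - 1).factorial * (p).factorial
        = (2 * p - 1).factorial := by
      have h := Nat.choose_mul_factorial_mul_factorial
        (show p - 1 ≤ 2 * p - 1 by omega)
      have : 2 * p - 1 - (p - 1) = p := by omega
      rw [this] at h
      exact h
    rw [h1]
    have h2 : ∏ k ∈ Finset.Ico 1 p, (p + k) = ∏ k ∈ Finset.Ico (p + 1) (2 * p), k := by
      rw [Finset.prod_Ico_eq_prod_range, Finset.prod_Ico_eq_prod_range]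
      have : 2 * p - (p + 1) = p - 1 := by omega
      rw [this]
      apply Finset.prod_congr rfl
      intros; omega
    rw [h2]
    symm
    have h3 : (∏ k ∈ Finset.Ico 1 (p + 1), k) * ∏ k ∈ Finset.Ico (p + 1) (2 * p), k
        = ∏ k ∈ Finset.Ico 1 (2 * p), k :=
      Finset.prod_Ico_consecutive _ (by omega) (by omega)
    calc (∏ k ∈ Finset.Ico (p + 1) (2 * p), k) * p.factorial
        = (∏ k ∈ Finset.Ico 1 (p + 1), k) * ∏ k ∈ Finset.Ico (p + 1) (2 * p), k := by
          rw [Finset.prod_Ico_id_eq_factorial]; ring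
      _ = ∏ k ∈ Finset.Ico 1 (2 * p), k := h3
      _ = (2 * p - 1).factorial := by
          have h4 := Finset.prod_Ico_id_eq_factorial (2 * p - 1)
          rwa [Nat.sub_add_cancel (by omega : 1 ≤ 2 * p)] at h4
  have hevalp : f.eval (p : ℤ)
      = ((2 * p - 1).choose (p - 1) : ℤ) * ((p - 1).factorial : ℤ) := by
    rw [hf, eval_prod]
    simp only [eval_add, eval_X, eval_C]
    rw [← Nat.cast_mul, hnat, Nat.cast_prod]
    push_cast
    rfl
  -- p ∣ coeff 2
  have hc2 : (p : ℤ) ∣ f.coeff 2 := by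
    rw [← ZMod.intCast_zmod_eq_zero_iff_dvd]
    have hmap : f.map (Int.castRingHom (ZMod p)) = X ^ (p - 1) - 1 := by
      have step1 : f.map (Int.castRingHom (ZMod p))
          = ∏ k ∈ Finset.Ico 1 p, (X + C ((k : ℕ) : ZMod p)) := by
        rw [hf, Polynomial.map_prod]
        apply Finset.prod_congr rfl
        intro k _
        rw [Polynomial.map_add, Polynomial.map_X, Polynomial.map_C]
        congr 1
        simp
      rw [step1]
      rw [← zmod_prod p hp, ← reflect_Ico p (fun k => (X - C ((k : ℕ) : ZMod p)))]
      apply Finset.prod_congr rfl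
      intro k hk
      have hk' := Finset.mem_Ico.mp hk
      have : ((p - k : ℕ) : ZMod p) = -(k : ZMod p) := by
        rw [Nat.cast_sub hk'.2.le, ZMod.natCast_self, zero_sub]
      rw [this, map_neg, sub_neg_eq_add]
    have := congrArg (fun q => Polynomial.coeff q 2) hmap
    simp only [coeff_map, eq_intCast] at this
    rw [this]
    rw [coeff_sub, coeff_X_pow, coeff_one]
    rw [if_neg (by omega : ¬(2 = p - 1))]
    norm_num
  -- key divisibility
  have hkey : (p : ℤ) ^ 3 ∣ f.eval (p : ℤ) + f.eval (-(p : ℤ)) - 2 * f.coeff 0 := by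
    set N := f.natDegree + 1 with hN
    have e1 := Polynomial.eval_eq_sum_range (p := f) (p : ℤ)
    have e2 := Polynomial.eval_eq_sum_range (p := f) (-(p : ℤ))
    rw [e1, e2]
    have hsum : ∑ i ∈ Finset.range N, f.coeff i * (p : ℤ) ^ i
        + ∑ i ∈ Finset.range N, f.coeff i * (-(p : ℤ)) ^ i - 2 * f.coeff 0
        = ∑ i ∈ Finset.Ico 1 N, f.coeff i * ((p : ℤ) ^ i + (-(p : ℤ)) ^ i) := by
      rw [← Finset.sum_add_distrib]
      have hsplit : ∑ i ∈ Finset.range N,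
          (f.coeff i * (p : ℤ) ^ i + f.coeff i * (-(p : ℤ)) ^ i)
          = (f.coeff 0 * (p : ℤ) ^ 0 + f.coeff 0 * (-(p : ℤ)) ^ 0)
            + ∑ i ∈ Finset.Ico 1 N,
              (f.coeff i * (p : ℤ) ^ i + f.coeff i * (-(p : ℤ)) ^ i) := by
        rw [Finset.range_eq_Ico, Finset.sum_eq_sum_Ico_succ_bot (by omega)]
      rw [hsplit]
      simp only [pow_zero, mul_one]
      rw [Finset.sum_congr rfl (fun i _ => by ring :
        ∀ i ∈ Finset.Ico 1 N, f.coeff i * (p : ℤ) ^ i + f.coeff i * (-(p : ℤ)) ^ i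
          = f.coeff i * ((p : ℤ) ^ i + (-(p : ℤ)) ^ i))]
      ring
    rw [hsum]
    apply Finset.dvd_sum
    intro i hi
    have hi1 : 1 ≤ i := (Finset.mem_Ico.mp hi).1
    rcases Nat.even_or_odd i with he | ho
    · rw [he.neg_pow]
      rcases eq_or_ne i 2 with h2 | h2
      · subst h2
        obtain ⟨c, hc⟩ := hc2
        rw [hc]
        ring_nf
        exact ⟨c * 2, by ring⟩
      · have hi4 : 3 ≤ i := by
          rcases he with ⟨m, hm⟩; omega
        have : (p : ℤ) ^ 3 ∣ (p : ℤ) ^ i := pow_dvd_pow _ hi4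
        exact Dvd.dvd.mul_left (by rw [← two_mul]; exact this.mul_left 2) _
    · rw [ho.neg_pow, add_neg_cancel, mul_zero]
      exact dvd_zero _
  -- conclude part 1
  have hdvd : (p : ℤ) ^ 3 ∣ ((2 * p - 1).choose (p - 1) : ℤ) - 1 := by
    have h1 : (p : ℤ) ^ 3 ∣ (((2 * p - 1).choose (p - 1) : ℤ) - 1)
        * ((p - 1).factorial : ℤ) := by
      have := hkey
      rw [hevalp, hevalneg, ha0] at this
      have heq : ((2 * p - 1).choose (p - 1) : ℤ) * ((p - 1).factorial : ℤ)
          + ((p - 1).factorial : ℤ) - 2 * ((p - 1).factorial : ℤ)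
          = (((2 * p - 1).choose (p - 1) : ℤ) - 1) * ((p - 1).factorial : ℤ) := by ring
      rwa [heq] at this
    have hcop : IsCoprime ((p : ℤ) ^ 3) (((p - 1).factorial : ℤ)) := by
      have hnatcop : Nat.Coprime (p ^ 3) ((p - 1).factorial) := by
        apply Nat.Coprime.pow_left
        rw [hp.coprime_iff_not_dvd, hp.dvd_factorial]
        omega
      have := Nat.isCoprime_iff_coprime.mpr hnatcop
      push_cast at this
      exact this
    exact hcop.dvd_of_dvd_mul_right h1
  have part1 : (((2 * p - 1).choose (p - 1) : ZMod (p ^ 3)) = 1) := by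
    have : ((((2 * p - 1).choose (p - 1) : ℤ) - 1 : ℤ) : ZMod (p ^ 3)) = 0 := by
      rw [ZMod.intCast_zmod_eq_zero_iff_dvd]
      push_cast
      exact hdvd
    push_cast at this
    linear_combination this
  refine ⟨part1, ?_⟩
  have h2 : (2 * p).choose p = 2 * (2 * p - 1).choose (p - 1) := by
    have h := Nat.add_one_mul_choose_eq (2 * p - 1) (p - 1)
    have e1 : 2 * p - 1 + 1 = 2 * p := by omega
    have e2 : p - 1 + 1 = p := by omega
    rw [e1, e2] at h
    apply Nat.eq_of_mul_eq_mul_right hp0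
    rw [← h]; ring
  rw [h2]
  push_cast
  rw [part1]
  ring
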